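/- In the possibilistic path program, the necessity degree of path(x,y) computed by the max-min recursion equals the maximum over all paths from x to y of the minimum edge weight along the path: formally, on a finite directed graph with edge weights w : E → [0,1], the function f defined as the least fixed point of f(x,x) = 1 and f(x,y) = max over edges (z,y) of min(f(x,z), w(z,y)) satisfies f(x,y) = max over directed paths π from x to y of min of the weights of edges in π (with f(x,y) = 0 if no path exists). -/

import Mathlib

/-- The min-weight of the path that starts at `x` and successively visits the
vertices of `l` (1 for the empty path). -/
noncomputable def chainW {V : Type} (w : V → V → ℝ) : V → List V → ℝ
  | _, [] => 1
  | x, z :: l => min (w x z) (chainW w z l)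

lemma chainW_mem {V : Type} (w : V → V → ℝ) (hw : ∀ a b, w a b ∈ Set.Icc (0:ℝ) 1) :
    ∀ (l : List V) (x : V), chainW w x l ∈ Set.Icc (0:ℝ) 1 := by
  intro l
  induction l with
  | nil => intro x; simp [chainW]
  | cons z l ih =>
    intro x
    have h1 := hw x z
    have h2 := ih z
    simp only [chainW, Set.mem_Icc] at *
    exact ⟨le_min h1.1 h2.1, min_le_of_left_le h1.2⟩

lemma chainW_concat {V : Type} (w : V → V → ℝ) (l : List V) (x y : V) :
    chainW w x (l ++ [y]) =
      min (chainW w x l) (w ((x :: l).getLast (List.cons_ne_nil x l)) y) := by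
  induction l generalizing x with
  | nil => simp [chainW]; exact min_comm _ _
  | cons z l ih =>
    have hg : ((x :: z :: l).getLast (List.cons_ne_nil _ _))
        = ((z :: l).getLast (List.cons_ne_nil _ _)) := List.getLast_cons _
    show min (w x z) (chainW w z (l ++ [y]))
      = min (min (w x z) (chainW w z l)) (w ((x :: z :: l).getLast (List.cons_ne_nil _ _)) y)
    rw [ih z, hg, min_assoc]

lemma getLast_cons_concat {V : Type} (x y : V) (l : List V) :
    (x :: (l ++ [y])).getLast (List.cons_ne_nil _ _) = y := by
  rw [List.getLast_cons (by simp)]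
  exact List.getLast_concat

/-- on a finite directed graph with edge weights `w : V → V → [0,1]`
(`w z y = 0` when there is no edge), the least fixed point `f` of the max-min
Bellman recursion `f x x = 1`, `f x y = max_z min (f x z) (w z y)` (for `y ≠ x`)
equals, for all `x y`, the supremum over all directed paths from `x` to `y` of
the minimum edge weight along the path (`0` if there is no path, the empty path
from `x` to `x` having weight 1). -/
theorem maxmin_path_lfp (V : Type) [Fintype V] [DecidableEq V] [Nonempty V]
    (w : V → V → ℝ) (hw : ∀ a b, w a b ∈ Set.Icc (0:ℝ) 1)
    (f : V → V → ℝ) (hf01 : ∀ x y, f x y ∈ Set.Icc (0:ℝ) 1)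
    (hrefl : ∀ x, f x x = 1)
    (hstep : ∀ x y, x ≠ y →
      f x y = Finset.univ.sup' Finset.univ_nonempty (fun z => min (f x z) (w z y)))
    (hleast : ∀ g : V → V → ℝ, (∀ x y, g x y ∈ Set.Icc (0:ℝ) 1) →
      (∀ x, g x x = 1) →
      (∀ x y, x ≠ y →
        g x y = Finset.univ.sup' Finset.univ_nonempty (fun z => min (g x z) (w z y))) →
      ∀ x y, f x y ≤ g x y) :
    ∀ x y : V,
      f x y = ⨆ l : {l : List V // (x :: l).getLast (List.cons_ne_nil x l) = y},
        chainW w x l.1 := by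
  have hNe : ∀ x y : V,
      Nonempty {l : List V // (x :: l).getLast (List.cons_ne_nil x l) = y} :=
    fun x y => ⟨⟨[y], by simp⟩⟩
  set P : V → V → ℝ := fun x y =>
    ⨆ l : {l : List V // (x :: l).getLast (List.cons_ne_nil x l) = y},
      chainW w x l.1 with hPdef
  have hBdd : ∀ x y : V, BddAbove (Set.range
      fun l : {l : List V // (x :: l).getLast (List.cons_ne_nil x l) = y} =>
        chainW w x l.1) := by
    intro x y
    refine ⟨1, ?_⟩
    rintro r ⟨l, rfl⟩
    exact (chainW_mem w hw l.1 x).2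
  have hP01 : ∀ x y, P x y ∈ Set.Icc (0:ℝ) 1 := by
    intro x y
    constructor
    · have h := le_ciSup (hBdd x y) (⟨[y], by simp⟩ :
        {l : List V // (x :: l).getLast (List.cons_ne_nil x l) = y})
      exact le_trans (chainW_mem w hw [y] x).1 h
    · exact ciSup_le fun l => (chainW_mem w hw l.1 x).2
  have hPrefl : ∀ x, P x x = 1 := by
    intro x
    refine le_antisymm (hP01 x x).2 ?_
    have h := le_ciSup (hBdd x x) (⟨[], by simp⟩ :
      {l : List V // (x :: l).getLast (List.cons_ne_nil x l) = x})
    simpa [chainW] using h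
  -- every chain weight is ≤ f
  have key : ∀ (l : List V) (x : V),
      chainW w x l ≤ f x ((x :: l).getLast (List.cons_ne_nil x l)) := by
    intro l
    induction l using List.reverseRecOn with
    | nil => intro x; simp [chainW, hrefl]
    | append_singleton l y0 ih =>
      intro x
      rw [chainW_concat]
      rw [getLast_cons_concat]
      set z := (x :: l).getLast (List.cons_ne_nil x l) with hz
      by_cases hxy : x = y0
      · subst hxy
        rw [hrefl]
        exact le_trans (min_le_right _ _) (hw z x).2
      · rw [hstep x y0 hxy]
        refine le_trans ?_ (Finset.le_sup' (fun z => min (f x z) (w z y0))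
          (Finset.mem_univ z))
        exact min_le_min (ih x) le_rfl
  have hPstep : ∀ x y, x ≠ y →
      P x y = Finset.univ.sup' Finset.univ_nonempty (fun z => min (P x z) (w z y)) := by
    intro x y hxy
    refine le_antisymm ?_ ?_
    · refine ciSup_le fun l => ?_
      have hl : l.1 ≠ [] := by
        intro h
        apply hxy
        have := l.2
        rw [h] at this
        simpa using this
      have hlastl : l.1.getLast hl = y := by
        have := l.2
        rwa [List.getLast_cons hl] at this
      have hdec : l.1.dropLast ++ [y] = l.1 := by
        have h := List.dropLast_append_getLast hl
        rwa [hlastl] at h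
      set z := (x :: l.1.dropLast).getLast (List.cons_ne_nil _ _) with hzdef
      have h1 : chainW w x l.1 = min (chainW w x l.1.dropLast) (w z y) := by
        conv_lhs => rw [← hdec]
        rw [chainW_concat]
      have h2 : chainW w x l.1.dropLast ≤ P x z :=
        le_ciSup (hBdd x z) (⟨l.1.dropLast, rfl⟩ :
          {l' : List V // (x :: l').getLast (List.cons_ne_nil x l') = z})
      calc chainW w x l.1 ≤ min (P x z) (w z y) := by
            rw [h1]; exact min_le_min h2 le_rfl
        _ ≤ _ := Finset.le_sup' (fun z => min (P x z) (w z y)) (Finset.mem_univ z)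
    · refine Finset.sup'_le _ _ fun z _ => ?_
      have hmap : min (P x z) (w z y)
          = ⨆ l : {l : List V // (x :: l).getLast (List.cons_ne_nil x l) = z},
              min (chainW w x l.1) (w z y) := by
        refine Monotone.map_ciSup_of_continuousAt
          (f := fun t => min t (w z y)) ?_ ?_ (hBdd x z)
        · exact (continuous_id.min continuous_const).continuousAt
        · exact fun a b hab => min_le_min hab le_rfl
      rw [hmap]
      refine ciSup_le fun l => ?_
      have hconc : ((x :: (l.1 ++ [y])).getLast (List.cons_ne_nil _ _)) = y :=
        getLast_cons_concat x y l.1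
      have h1 : chainW w x (l.1 ++ [y]) = min (chainW w x l.1) (w z y) := by
        rw [chainW_concat, l.2]
      rw [← h1]
      exact le_ciSup (hBdd x y) (⟨l.1 ++ [y], hconc⟩ :
        {l' : List V // (x :: l').getLast (List.cons_ne_nil x l') = y})
  intro x y
  refine le_antisymm (hleast P hP01 hPrefl hPstep x y) ?_
  refine ciSup_le fun l => ?_
  have h := key l.1 x
  rwa [l.2] at h
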